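/- In the reduction instance above, for any string S of length k+1 of the form S 0 = $ and S (h+1) = v_{h,i_h}, the total optimal cost (sum over N copies of each 𝒱_i of Ham(S,𝒱_i), plus the sum over edges j of the minimum alignment distance of S in ℰ_j) equals N(n−1)k + mk − |E(K)|, where K = {v_{h,i_h} : h < k} and |E(K)| is the number of edges with both endpoints in K. -/

import Mathlib

/-- Hamming distance between two strings of length `n`. -/
def ham {n : ℕ} {α : Type*} [DecidableEq α] (S T : Fin n → α) : ℕ :=
  (Finset.univ.filter fun i => S i ≠ T i).card

/-- The vertex string `𝒱_i = $ v_{1,i} … v_{k,i}`. -/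
def Vstr {k n : ℕ} {α : Type*} (dollar : α) (v : Fin k → Fin n → α) (i : Fin n) :
    Fin (k+1) → α := Fin.cons dollar fun h => v h i

/-- The edge string `ℰ`. -/
def Estr {k n : ℕ} {α : Type*} (dollar circ : α) (v : Fin k → Fin n → α)
    (hs ht : Fin k) (js jt : Fin n) : Fin (k+2) → α := fun q =>
  if q.val = 0 then dollar
  else if q.val = hs.val + 2 then v hs js
  else if q.val = ht.val + 2 then v ht jt
  else circ

/-- The length-`L` window of a length-`(L+1)` string at offset `p ∈ {0,1}`. -/
def window {L : ℕ} {α : Type*} (T : Fin (L+1) → α) (p : Fin 2) : Fin L → α :=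
  fun i => T ⟨p.val + i.val, by have := p.2; have := i.2; omega⟩

theorem stmt9 {k n m : ℕ} {α : Type*} [DecidableEq α]
    (hk : 1 ≤ k) (hn : 1 ≤ n)
    (dollar circ : α) (v : Fin k → Fin n → α)
    (hv : Function.Injective fun q : Fin k × Fin n => v q.1 q.2)
    (hvd : ∀ h i, v h i ≠ dollar) (hvc : ∀ h i, v h i ≠ circ) (hdc : dollar ≠ circ)
    (hs ht : Fin m → Fin k) (js jt : Fin m → Fin n)
    (hne : ∀ j, hs j ≠ ht j)
    (idx : Fin k → Fin n)
    (S : Fin (k+1) → α) (hS : S = Fin.cons dollar fun h => v h (idx h)) :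
    (m * (k+2) + 1) * (∑ i, ham S (Vstr dollar v i)) +
      ∑ j, min
        (ham S (window (Estr dollar circ v (hs j) (ht j) (js j) (jt j)) 0))
        (ham S (window (Estr dollar circ v (hs j) (ht j) (js j) (jt j)) 1)) =
    (m * (k+2) + 1) * (n - 1) * k + m * k -
      (Finset.univ.filter fun j : Fin m => js j = idx (hs j) ∧ jt j = idx (ht j)).card := by
  classical
  subst hS
  have hv2 : ∀ (h h' : Fin k) (a b : Fin n), v h a = v h' b ↔ h = h' ∧ a = b := by
    intro h h' a b
    constructor
    · intro e
      have e2 : ((h, a) : Fin k × Fin n) = (h', b) := hv e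
      simpa [Prod.ext_iff] using e2
    · rintro ⟨rfl, rfl⟩; rfl
  -- vertex part
  have hV : (∑ i, ham (Fin.cons dollar fun h => v h (idx h)) (Vstr dollar v i))
      = (n - 1) * k := by
    have h1 : ∀ i, ham (Fin.cons dollar fun h => v h (idx h)) (Vstr dollar v i)
        = ∑ h : Fin k, if idx h ≠ i then 1 else 0 := by
      intro i
      rw [ham, Finset.card_filter, Fin.sum_univ_succ]
      simp [Vstr, hv2]
    calc (∑ i, ham (Fin.cons dollar fun h => v h (idx h)) (Vstr dollar v i))
        = ∑ i, ∑ h : Fin k, if idx h ≠ i then 1 else 0 := by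
          exact Finset.sum_congr rfl fun i _ => h1 i
      _ = ∑ h : Fin k, ∑ i, if idx h ≠ i then 1 else 0 := Finset.sum_comm
      _ = ∑ _h : Fin k, (n - 1) := by
          refine Finset.sum_congr rfl fun h _ => ?_
          rw [← Finset.card_filter, Finset.filter_ne,
            Finset.card_erase_of_mem (Finset.mem_univ _), Finset.card_univ,
            Fintype.card_fin]
      _ = (n - 1) * k := by simp [mul_comm]
  -- edge part
  have key : ∀ j, min
        (ham (Fin.cons dollar fun h => v h (idx h))
          (window (Estr dollar circ v (hs j) (ht j) (js j) (jt j)) 0))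
        (ham (Fin.cons dollar fun h => v h (idx h))
          (window (Estr dollar circ v (hs j) (ht j) (js j) (jt j)) 1))
      = k - (if js j = idx (hs j) ∧ jt j = idx (ht j) then 1 else 0) := by
    intro j
    set a := hs j with ha
    set b := ht j with hb
    have hab : a ≠ b := hne j
    have hk2 : 2 ≤ k := by
      rcases Nat.lt_or_ge k 2 with h | h
      · interval_cases k
        exact absurd (Fin.ext_iff.not.mp hab) (by omega)
      · exact h
    -- offset 0
    have h0 : ham (Fin.cons dollar fun h => v h (idx h))
        (window (Estr dollar circ v a b (js j) (jt j)) 0) = k := by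
      rw [ham, Finset.card_filter, Fin.sum_univ_succ]
      have e0 : (if (Fin.cons dollar fun h => v h (idx h) : Fin (k+1) → α) 0
          ≠ window (Estr dollar circ v a b (js j) (jt j)) 0 0 then 1 else 0) = 0 := by
        simp [window, Estr]
      have e1 : ∀ h : Fin k, (if (Fin.cons dollar fun h => v h (idx h) : Fin (k+1) → α) h.succ
          ≠ window (Estr dollar circ v a b (js j) (jt j)) 0 h.succ then 1 else 0) = 1 := by
        intro h
        rw [if_pos]
        simp only [Fin.cons_succ, window, Estr, Fin.val_succ, Fin.val_zero]
        split_ifs with c1 c2 c3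
        · omega
        · intro e
          have := (hv2 _ _ _ _).mp e
          have : h = a := this.1
          subst this
          omega
        · intro e
          have := (hv2 _ _ _ _).mp e
          have : h = b := this.1
          subst this
          omega
        · exact hvc _ _
        · exact (‹False›).elim
        · intro e
          have := (hv2 _ _ _ _).mp e
          have : h = a := this.1
          subst this
          omega
        · intro e
          have := (hv2 _ _ _ _).mp e
          have : h = b := this.1
          subst this
          omega
        · exact hvc _ _
      rw [e0, Finset.sum_congr rfl fun h _ => e1 h]
      simp
    -- offset 1
    have h1 : ham (Fin.cons dollar fun h => v h (idx h))
        (window (Estr dollar circ v a b (js j) (jt j)) 1)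
        = 1 + ((if js j = idx a then 0 else 1) + (if jt j = idx b then 0 else 1)
            + (k - 2)) := by
      rw [ham, Finset.card_filter, Fin.sum_univ_succ]
      have e0 : (if (Fin.cons dollar fun h => v h (idx h) : Fin (k+1) → α) 0
          ≠ window (Estr dollar circ v a b (js j) (jt j)) 1 0 then 1 else 0) = 1 := by
        have hne1 : (1 : ℕ) ≠ a.val + 2 := by omega
        have hne2 : (1 : ℕ) ≠ b.val + 2 := by omega
        simp [window, Estr, hne1, hne2, hdc]
      set g : Fin k → ℕ := fun h =>
        if (Fin.cons dollar fun h => v h (idx h) : Fin (k+1) → α) h.succ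
          ≠ window (Estr dollar circ v a b (js j) (jt j)) 1 h.succ then 1 else 0 with hg
      have ga : g a = if js j = idx a then 0 else 1 := by
        have c1 : (1 : ℕ) + (a.val + 1) ≠ 0 := by omega
        have c2 : (1 : ℕ) + (a.val + 1) = a.val + 2 := by omega
        simp only [hg, Fin.cons_succ, window, Estr, Fin.val_succ, Fin.val_one, c2,
          if_neg (by omega : ¬ a.val + 2 = 0), if_pos rfl]
        by_cases hA : js j = idx a
        · simp [hA]
        · rw [if_pos, if_neg (by simpa using hA)]
          intro e
          exact hA ((hv2 _ _ _ _).mp e).2.symm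
      have gb : g b = if jt j = idx b then 0 else 1 := by
        have c2 : (1 : ℕ) + (b.val + 1) = b.val + 2 := by omega
        have cne : ¬ b.val + 2 = a.val + 2 := by
          intro e; exact hab (Fin.ext (by omega)).symm
        simp only [hg, Fin.cons_succ, window, Estr, Fin.val_succ, Fin.val_one, c2,
          if_neg (by omega : ¬ b.val + 2 = 0), if_neg cne, if_pos rfl]
        by_cases hB : jt j = idx b
        · simp [hB]
        · rw [if_pos, if_neg (by simpa using hB)]
          intro e
          exact hB ((hv2 _ _ _ _).mp e).2.symm
      have gother : ∀ h : Fin k, h ≠ a → h ≠ b → g h = 1 := by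
        intro h h1a h1b
        have c1 : ¬ (1 : ℕ) + (h.val + 1) = 0 := by omega
        have c2 : ¬ (1 : ℕ) + (h.val + 1) = a.val + 2 := by
          intro e; exact h1a (Fin.ext (by omega))
        have c3 : ¬ (1 : ℕ) + (h.val + 1) = b.val + 2 := by
          intro e; exact h1b (Fin.ext (by omega))
        simp only [hg, Fin.cons_succ, window, Estr, Fin.val_succ, Fin.val_one,
          if_neg c1, if_neg c2, if_neg c3]
        rw [if_pos]
        exact hvc _ _
      have hsub : ({a, b} : Finset (Fin k)) ⊆ Finset.univ := Finset.subset_univ _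
      have hsum : ∑ h : Fin k, g h
          = (∑ h ∈ Finset.univ \ {a, b}, g h) + ∑ h ∈ ({a, b} : Finset (Fin k)), g h :=
        (Finset.sum_sdiff hsub).symm
      have hpair : ∑ h ∈ ({a, b} : Finset (Fin k)), g h = g a + g b :=
        Finset.sum_pair hab
      have hrest : ∑ h ∈ Finset.univ \ {a, b}, g h = k - 2 := by
        rw [Finset.sum_congr rfl fun h hh => ?_]
        · rw [Finset.sum_const, smul_eq_mul, mul_one, Finset.card_sdiff_of_subset hsub,
            Finset.card_univ, Fintype.card_fin, Finset.card_pair hab]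
        · simp only [Finset.mem_sdiff, Finset.mem_insert, Finset.mem_singleton] at hh
          exact gother h (fun e => hh.2 (Or.inl e)) (fun e => hh.2 (Or.inr e))
      rw [e0, hsum, hpair, hrest, ga, gb]
      ring
    rw [h0, h1]
    by_cases hA : js j = idx a <;> by_cases hB : jt j = idx b <;>
      simp [hA, hB] <;> omega
  rw [hV, Finset.sum_congr rfl fun j _ => key j]
  have hcard : (Finset.univ.filter fun j : Fin m =>
      js j = idx (hs j) ∧ jt j = idx (ht j)).card
      = ∑ j : Fin m, (if js j = idx (hs j) ∧ jt j = idx (ht j) then 1 else 0) :=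
    Finset.card_filter _ _
  have hsum2 : (∑ j : Fin m, (k - if js j = idx (hs j) ∧ jt j = idx (ht j) then 1 else 0))
      + ∑ j : Fin m, (if js j = idx (hs j) ∧ jt j = idx (ht j) then 1 else 0)
      = m * k := by
    rw [← Finset.sum_add_distrib]
    have : ∀ j : Fin m, (k - if js j = idx (hs j) ∧ jt j = idx (ht j) then 1 else 0)
        + (if js j = idx (hs j) ∧ jt j = idx (ht j) then 1 else 0) = k := by
      intro j; split_ifs <;> omega
    rw [Finset.sum_congr rfl fun j _ => this j]
    simp [mul_comm]
  have hassoc : (m * (k+2) + 1) * ((n - 1) * k) = (m * (k+2) + 1) * (n - 1) * k :=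
    (mul_assoc _ _ _).symm
  omega
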